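/- Let T be a standard Borel space, ν a finite Borel measure on T, G a countable group acting on T by Borel bijections with orbit equivalence relation R, ν quasi-invariant with Radon–Nikodym cocycle δ, and S a finite symmetric generating set of G. Suppose R is hyperfinite: there is an increasing sequence (Q_n) of Borel subrelations of R, each of whose classes is finite, such that for ν-almost every x ∈ T one has ⋃_n Q_n[x] = R[x]. Then for ν-almost every x ∈ T, liminf_{n→∞} |∂Q_n[x]|_x / |Q_n[x]|_x = 0; in particular ν-almost every class of R is δ-Følner, i.e., it contains finite subsets A_n with |∂A_n|_x / |A_n|_x → 0. (This is Proposition 4.2 of the paper: an amenable, equivalently hyperfinite, discrete measured equivalence relation has δ-Følner classes almost everywhere.) -/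

import Mathlib

open MeasureTheory MulAction Set Filter
open scoped ENNReal Classical


/-- The boundary of a set `A` with respect to a finite symmetric set `S` of group
elements: the points of `A` moved outside of `A` by some element of `S`. -/
def smulBoundary {G T : Type*} [SMul G T] (S : Finset G) (A : Set T) : Set T :=
  {y ∈ A | ∃ s ∈ S, s • y ∉ A}

/-- The `δ`-mass `|A|ₓ = Σ_{y ∈ A} δ(y,x)` of a (finite) set `A` relative to `x`. -/
noncomputable def deltaMass {T : Type*} (δ : T → T → ℝ) (A : Set T) (x : T) : ℝ :=
  ∑ᶠ y ∈ A, δ y x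


section MinRepSec
variable {T : Type*} {G : Type*} [Group G] [MulAction G T]

/-- `g` has minimal rank among elements sending `x` to `g • x`. -/
def MinRep (r : G → ℕ) (g : G) (x : T) : Prop := ∀ h : G, r h < r g → h • x ≠ g • x

/-- the minimal-rank element sending `x` to `y` (junk if none). -/
noncomputable def repEl (r : G → ℕ) (x y : T) : G :=
  if h : ∃ g : G, g • x = y then
    (Nat.sInf_mem (s := {n | ∃ g : G, r g = n ∧ g • x = y})
      ⟨r h.choose, h.choose, rfl, h.choose_spec⟩).choose
  else 1

lemma repEl_smul (r : G → ℕ) {x y : T} (h : ∃ g : G, g • x = y) :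
    repEl r x y • x = y := by
  rw [repEl, dif_pos h]
  exact (Nat.sInf_mem (s := {n | ∃ g : G, r g = n ∧ g • x = y})
      ⟨r h.choose, h.choose, rfl, h.choose_spec⟩).choose_spec.2

lemma repEl_minRep (r : G → ℕ) {x y : T} (h : ∃ g : G, g • x = y) :
    MinRep r (repEl r x y) x := by
  intro h' hlt heq
  set s : Set ℕ := {n | ∃ g : G, r g = n ∧ g • x = y} with hs
  have hmem := Nat.sInf_mem (s := s) ⟨r h.choose, h.choose, rfl, h.choose_spec⟩
  have hval : r (repEl r x y) = sInf s := by
    rw [repEl, dif_pos h]; exact hmem.choose_spec.1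
  have hy : h' • x = y := by rw [heq, repEl_smul r h]
  have : sInf s ≤ r h' := Nat.sInf_le ⟨h', rfl, hy⟩
  omega
  
lemma minRep_unique (r : G → ℕ) (hr : Function.Injective r) {g g' : G} {x : T}
    (h1 : MinRep r g x) (h2 : MinRep r g' x) (he : g • x = g' • x) : g = g' := by
  rcases lt_trichotomy (r g) (r g') with h | h | h
  · exact absurd he (h2 g h)
  · exact hr h
  · exact absurd he.symm (h1 g' h)

lemma repEl_eq (r : G → ℕ) (hr : Function.Injective r) {g : G} {x : T}
    (hm : MinRep r g x) : repEl r x (g • x) = g :=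
  minRep_unique r hr (repEl_minRep r ⟨g, rfl⟩) hm (repEl_smul r ⟨g, rfl⟩)

lemma tsum_minRep (r : G → ℕ) (hr : Function.Injective r) (x : T) (f : T → ℝ≥0∞)
    (F : Finset T) (hsupp : ∀ y, f y ≠ 0 → y ∈ F)
    (hF : ∀ y ∈ F, ∃ g : G, g • x = y) :
    ∑' g : G, (if MinRep r g x then f (g • x) else 0) = ∑ y ∈ F, f y := by
  classical
  have hsum : ∑' g : G, (if MinRep r g x then f (g • x) else 0)
      = ∑ g ∈ F.image (repEl r x), (if MinRep r g x then f (g • x) else 0) := by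
    apply tsum_eq_sum
    intro g hg
    by_cases hm : MinRep r g x
    · rw [if_pos hm]
      by_contra h0
      exact hg (Finset.mem_image.2 ⟨g • x, hsupp _ h0, repEl_eq r hr hm⟩)
    · exact if_neg hm
  rw [hsum, Finset.sum_image ?_]
  · apply Finset.sum_congr rfl
    intro y hy
    rw [if_pos (repEl_minRep r (hF y hy)), repEl_smul r (hF y hy)]
  · intro y hy y' hy' hee
    rw [← repEl_smul r (hF y hy), hee, repEl_smul r (hF y' hy')]

lemma tsum_minRep' (r : G → ℕ) (hr : Function.Injective r) (y : T) (f : T → ℝ≥0∞)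
    (F : Finset T) (hsupp : ∀ z, f z ≠ 0 → z ∈ F)
    (hF : ∀ z ∈ F, ∃ g : G, g • z = y) :
    ∑' g : G, (if MinRep r g (g⁻¹ • y) then f (g⁻¹ • y) else 0) = ∑ z ∈ F, f z := by
  classical
  have hsum : ∑' g : G, (if MinRep r g (g⁻¹ • y) then f (g⁻¹ • y) else 0)
      = ∑ g ∈ F.image (fun z => repEl r z y), (if MinRep r g (g⁻¹ • y) then f (g⁻¹ • y) else 0) := by
    apply tsum_eq_sum
    intro g hg
    by_cases hm : MinRep r g (g⁻¹ • y)
    · by_contra h0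
      rw [if_pos hm] at h0
      refine hg (Finset.mem_image.2 ⟨g⁻¹ • y, hsupp _ h0, ?_⟩)
      have : g • (g⁻¹ • y) = y := smul_inv_smul g y
      calc repEl r (g⁻¹ • y) y = repEl r (g⁻¹ • y) (g • (g⁻¹ • y)) := by rw [this]
        _ = g := repEl_eq r hr hm
    · exact if_neg hm
  rw [hsum, Finset.sum_image ?_]
  · apply Finset.sum_congr rfl
    intro z hz
    have h1 : repEl r z y • z = y := repEl_smul r (hF z hz)
    have h2 : (repEl r z y)⁻¹ • y = z := inv_smul_eq_iff.2 h1.symm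
    rw [h2, if_pos]
    exact repEl_minRep r (hF z hz)
  · intro z hz z' hz' hee
    have h1 : repEl r z y • z = y := repEl_smul r (hF z hz)
    have h2 : repEl r z' y • z' = y := repEl_smul r (hF z' hz')
    rw [show repEl r z y = repEl r z' y from hee] at h1
    exact (smul_left_cancel_iff _).1 (h1.trans h2.symm)

end MinRepSec

section MassSec
variable {T : Type*} {G : Type*} [Group G] [MulAction G T]

noncomputable def massE (δ : T → T → ℝ) (P : T → T → Prop) (r : G → ℕ) (x : T) : ℝ≥0∞ :=
  ∑' g : G, if MinRep r g x ∧ P x (g • x) then ENNReal.ofReal (δ (g • x) x) else 0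

noncomputable def bdryE (δ : T → T → ℝ) (P : T → T → Prop) (r : G → ℕ) (S : Finset G)
    (x : T) : ℝ≥0∞ :=
  ∑' g : G, if MinRep r g x ∧ P x (g • x) ∧ (∃ s ∈ S, ¬ P x (s • (g • x)))
    then ENNReal.ofReal (δ (g • x) x) else 0

variable {δ : T → T → ℝ} {P : T → T → Prop} {r : G → ℕ}

lemma massE_eq (hr : Function.Injective r) (x : T)
    (hsub : ∀ y, P x y → ∃ g : G, g • x = y) (hfin : {y | P x y}.Finite) :
    massE δ P r x = ∑ y ∈ hfin.toFinset, ENNReal.ofReal (δ y x) := by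
  have key := tsum_minRep r hr x (fun y => if P x y then ENNReal.ofReal (δ y x) else 0)
    hfin.toFinset
    (fun y hy => by
      simp only [ne_eq, ite_eq_right_iff, not_forall] at hy
      exact hfin.mem_toFinset.2 hy.1)
    (fun y hy => hsub y (hfin.mem_toFinset.1 hy))
  rw [massE]
  calc (∑' g : G, if MinRep r g x ∧ P x (g • x) then ENNReal.ofReal (δ (g • x) x) else 0)
      = ∑' g : G, (if MinRep r g x then
          (if P x (g • x) then ENNReal.ofReal (δ (g • x) x) else 0) else 0) := by
        refine tsum_congr fun g => ?_
        by_cases h1 : MinRep r g x <;> by_cases h2 : P x (g • x) <;> simp [h1, h2]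
    _ = ∑ y ∈ hfin.toFinset, (if P x y then ENNReal.ofReal (δ y x) else 0) := key
    _ = ∑ y ∈ hfin.toFinset, ENNReal.ofReal (δ y x) := by
        refine Finset.sum_congr rfl fun y hy => if_pos (hfin.mem_toFinset.1 hy)

lemma bdryE_eq (hr : Function.Injective r) (S : Finset G) (x : T)
    (hsub : ∀ y, P x y → ∃ g : G, g • x = y) (hfin : {y | P x y}.Finite) :
    bdryE δ P r S x = ∑ y ∈ hfin.toFinset,
      (if (∃ s ∈ S, ¬ P x (s • y)) then ENNReal.ofReal (δ y x) else 0) := by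
  have key := tsum_minRep r hr x
    (fun y => if P x y ∧ (∃ s ∈ S, ¬ P x (s • y)) then ENNReal.ofReal (δ y x) else 0)
    hfin.toFinset
    (fun y hy => by
      simp only [ne_eq, ite_eq_right_iff, not_forall] at hy
      exact hfin.mem_toFinset.2 hy.1.1)
    (fun y hy => hsub y (hfin.mem_toFinset.1 hy))
  rw [bdryE]
  calc (∑' g : G, if MinRep r g x ∧ P x (g • x) ∧ (∃ s ∈ S, ¬ P x (s • (g • x)))
          then ENNReal.ofReal (δ (g • x) x) else 0)
      = ∑' g : G, (if MinRep r g x then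
          (if P x (g • x) ∧ (∃ s ∈ S, ¬ P x (s • (g • x)))
            then ENNReal.ofReal (δ (g • x) x) else 0) else 0) := by
        refine tsum_congr fun g => ?_
        by_cases h1 : MinRep r g x <;>
          by_cases h2 : P x (g • x) ∧ (∃ s ∈ S, ¬ P x (s • (g • x))) <;>
          simp [h1, h2]
    _ = ∑ y ∈ hfin.toFinset,
          (if P x y ∧ (∃ s ∈ S, ¬ P x (s • y)) then ENNReal.ofReal (δ y x) else 0) := key
    _ = _ := by
        refine Finset.sum_congr rfl fun y hy => ?_
        by_cases h2 : (∃ s ∈ S, ¬ P x (s • y))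
        · rw [if_pos ⟨hfin.mem_toFinset.1 hy, h2⟩, if_pos h2]
        · simp [h2]

lemma massE_ne_top (hr : Function.Injective r) (x : T)
    (hsub : ∀ y, P x y → ∃ g : G, g • x = y) (hfin : {y | P x y}.Finite) :
    massE δ P r x ≠ ⊤ := by
  rw [massE_eq hr x hsub hfin]
  exact (ENNReal.sum_lt_top.2 fun y _ => ENNReal.ofReal_lt_top).ne

lemma massE_ne_zero (hδpos : ∀ x y : T, 0 < δ x y) (hr : Function.Injective r) (x : T)
    (hrefl : P x x)
    (hsub : ∀ y, P x y → ∃ g : G, g • x = y) (hfin : {y | P x y}.Finite) :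
    massE δ P r x ≠ 0 := by
  rw [massE_eq hr x hsub hfin]
  have hx : x ∈ hfin.toFinset := hfin.mem_toFinset.2 hrefl
  have : (0:ℝ≥0∞) < ENNReal.ofReal (δ x x) := ENNReal.ofReal_pos.2 (hδpos x x)
  refine (lt_of_lt_of_le this (Finset.single_le_sum (f := fun y => ENNReal.ofReal (δ y x)) (fun y _ => zero_le) hx)).ne'

lemma delta_mul_delta_symm (hδone : ∀ x : T, δ x x = 1)
    (hδcocycle : ∀ x y z : T, y ∈ orbit G x → z ∈ orbit G x → δ x z = δ x y * δ y z)
    {y z : T} (h : z ∈ orbit G y) : δ y z * δ z y = 1 := by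
  have := hδcocycle y z y h (mem_orbit_self y)
  rw [hδone y] at this
  exact this.symm

/-- mass transforms by the cocycle along a class. -/
lemma massE_cocycle (hδpos : ∀ x y : T, 0 < δ x y)
    (hδcocycle : ∀ x y z : T, y ∈ orbit G x → z ∈ orbit G x → δ x z = δ x y * δ y z)
    (hr : Function.Injective r)
    (hPsymm : ∀ {a b : T}, P a b → P b a) (hPtrans : ∀ {a b c : T}, P a b → P b c → P a c)
    (hPsub : ∀ a b : T, P a b → b ∈ orbit G a) (hPfin : ∀ a : T, {b | P a b}.Finite)
    {y z : T} (hzy : P y z) :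
    massE δ P r z = ENNReal.ofReal (δ y z) * massE δ P r y := by
  have hsub : ∀ a : T, ∀ b, P a b → ∃ g : G, g • a = b :=
    fun a b h => mem_orbit_iff.1 (hPsub a b h)
  rw [massE_eq hr z (hsub z) (hPfin z), massE_eq hr y (hsub y) (hPfin y)]
  have hFeq : (hPfin z).toFinset = (hPfin y).toFinset := by
    ext w
    simp only [Finite.mem_toFinset, mem_setOf_eq]
    exact ⟨fun h => hPtrans hzy h, fun h => hPtrans (hPsymm hzy) h⟩
  rw [hFeq, Finset.mul_sum]
  refine Finset.sum_congr rfl fun w hw => ?_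
  have hyw : P y w := (hPfin y).mem_toFinset.1 hw
  have h1 : y ∈ orbit G w := mem_orbit_symm.mp (hPsub y w hyw)
  have h2 : z ∈ orbit G w := by
    have hz : z ∈ orbit G y := hPsub y z hzy
    rcases mem_orbit_iff.1 h1 with ⟨g, hg⟩
    rcases mem_orbit_iff.1 hz with ⟨k, hk⟩
    exact mem_orbit_iff.2 ⟨k * g, by rw [mul_smul, hg, hk]⟩
  have hc : δ w z = δ w y * δ y z := hδcocycle w y z h1 h2
  rw [hc, ← ENNReal.ofReal_mul (hδpos y z).le]
  ring_nf

end MassSec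

section MeasSec
variable {T : Type*} [MeasurableSpace T] {G : Type*} [Group G] [MulAction G T]

lemma measurableSet_smulEqSmul [StandardBorelSpace T]
    (hact : ∀ g : G, Measurable fun x : T => g • x) (a b : G) :
    MeasurableSet {x : T | a • x = b • x} := by
  letI := upgradeStandardBorel T
  exact ((hact a).prodMk (hact b)) (isClosed_diagonal).measurableSet

lemma measurableSet_minRep [StandardBorelSpace T]
    (hact : ∀ g : G, Measurable fun x : T => g • x) (r : G → ℕ) [Countable G] (g : G) :
    MeasurableSet {x : T | MinRep r g x} := by
  have : {x : T | MinRep r g x} = ⋂ (h : G) (_ : r h < r g), {x : T | h • x = g • x}ᶜ := by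
    ext x; simp [MinRep]
  rw [this]
  exact MeasurableSet.iInter fun h => MeasurableSet.iInter fun _ =>
    (measurableSet_smulEqSmul hact h g).compl

variable {δ : T → T → ℝ} {P : T → T → Prop} {r : G → ℕ}

lemma measurableSet_rel (hPmeas : MeasurableSet {p : T × T | P p.1 p.2})
    {f h : T → T} (hf : Measurable f) (hh : Measurable h) :
    MeasurableSet {x : T | P (f x) (h x)} := (hf.prodMk hh) hPmeas

lemma measurableSet_bd (hPmeas : MeasurableSet {p : T × T | P p.1 p.2})
    (S : Finset G) (hact : ∀ g : G, Measurable fun x : T => g • x)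
    {f h : T → T} (hf : Measurable f) (hh : Measurable h) :
    MeasurableSet {x : T | ∃ s ∈ S, ¬ P (f x) (s • h x)} := by
  have : {x : T | ∃ s ∈ S, ¬ P (f x) (s • h x)}
      = ⋃ s ∈ S, {x : T | P (f x) (s • h x)}ᶜ := by
    ext x; simp
  rw [this]
  exact MeasurableSet.biUnion (S : Set G).to_countable fun s _ =>
    (measurableSet_rel hPmeas hf ((hact s).comp hh)).compl

lemma measurable_massE [StandardBorelSpace T] [Countable G]
    (hact : ∀ g : G, Measurable fun x : T => g • x)
    (hδmeas : Measurable fun p : T × T => δ p.1 p.2)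
    (hPmeas : MeasurableSet {p : T × T | P p.1 p.2}) :
    Measurable (massE δ P r (G := G)) := by
  apply Measurable.ennreal_tsum
  intro g
  refine Measurable.ite ?_ ?_ measurable_const
  · exact (measurableSet_minRep hact r g).inter
      (measurableSet_rel hPmeas measurable_id (hact g))
  · exact (hδmeas.comp ((hact g).prodMk measurable_id)).ennreal_ofReal

lemma measurable_bdryE [StandardBorelSpace T] [Countable G]
    (hact : ∀ g : G, Measurable fun x : T => g • x)
    (hδmeas : Measurable fun p : T × T => δ p.1 p.2)
    (hPmeas : MeasurableSet {p : T × T | P p.1 p.2}) (S : Finset G) :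
    Measurable (bdryE δ P r S) := by
  apply Measurable.ennreal_tsum
  intro g
  refine Measurable.ite ?_ ?_ measurable_const
  · exact (measurableSet_minRep hact r g).inter
      ((measurableSet_rel hPmeas measurable_id (hact g)).inter
        (measurableSet_bd hPmeas S hact measurable_id (hact g)))
  · exact (hδmeas.comp ((hact g).prodMk measurable_id)).ennreal_ofReal

/-- Change of variables along the action, from the Radon–Nikodym property. -/
lemma lintegral_smul_cov
    (hact : ∀ g : G, Measurable fun x : T => g • x) (ν : Measure T)
    (hδmeas : Measurable fun p : T × T => δ p.1 p.2)
    (hδRN : ∀ g : G, ∀ B : Set T, MeasurableSet B →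
      ν ((fun x => g • x) '' B) = ∫⁻ x in B, ENNReal.ofReal (δ (g • x) x) ∂ν)
    (g : G) (H : T → ℝ≥0∞) (hH : Measurable H) :
    ∫⁻ x, H (g • x) ∂ν = ∫⁻ y, H y * ENNReal.ofReal (δ (g⁻¹ • y) y) ∂ν := by
  have hdens : Measurable fun x : T => ENNReal.ofReal (δ (g⁻¹ • x) x) :=
    (hδmeas.comp ((hact g⁻¹).prodMk measurable_id)).ennreal_ofReal
  have hmap : ν.map (fun x => g • x)
      = ν.withDensity (fun x => ENNReal.ofReal (δ (g⁻¹ • x) x)) := by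
    ext B hB
    rw [Measure.map_apply (hact g) hB, withDensity_apply _ hB]
    have himg : (fun x : T => g • x) ⁻¹' B = (fun x : T => g⁻¹ • x) '' B := by
      ext z
      constructor
      · intro hz; exact ⟨g • z, hz, inv_smul_smul g z⟩
      · rintro ⟨w, hw, rfl⟩; simpa [smul_inv_smul] using hw
    rw [himg, hδRN g⁻¹ B hB]
  calc ∫⁻ x, H (g • x) ∂ν = ∫⁻ y, H y ∂(ν.map (fun x => g • x)) :=
        (lintegral_map hH (hact g)).symm
    _ = ∫⁻ y, ENNReal.ofReal (δ (g⁻¹ • y) y) * H y ∂ν := by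
        rw [hmap, lintegral_withDensity_eq_lintegral_mul ν hdens hH]; rfl
    _ = _ := by simp [mul_comm]

end MeasSec

section KeySec
variable {T : Type*} [MeasurableSpace T] {G : Type*} [Group G] [MulAction G T]

noncomputable def termL (δ : T → T → ℝ) (P : T → T → Prop) (r : G → ℕ) (S : Finset G)
    (g : G) (x : T) : ℝ≥0∞ :=
  (if MinRep r g x ∧ P x (g • x) ∧ (∃ s ∈ S, ¬ P x (s • (g • x)))
    then ENNReal.ofReal (δ (g • x) x) else 0) / massE δ P r x

noncomputable def termH (δ : T → T → ℝ) (P : T → T → Prop) (r : G → ℕ) (S : Finset G)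
    (g : G) (y : T) : ℝ≥0∞ :=
  (if MinRep r g (g⁻¹ • y) ∧ P (g⁻¹ • y) y ∧ (∃ s ∈ S, ¬ P (g⁻¹ • y) (s • y))
    then ENNReal.ofReal (δ y (g⁻¹ • y)) else 0) / massE δ P r (g⁻¹ • y)

variable {δ : T → T → ℝ} {P : T → T → Prop} {r : G → ℕ} {S : Finset G}

lemma termL_eq_termH (g : G) (x : T) : termL δ P r S g x = termH δ P r S g (g • x) := by
  simp only [termL, termH, inv_smul_smul]

lemma measurable_termH [StandardBorelSpace T] [Countable G]
    (hact : ∀ g : G, Measurable fun x : T => g • x)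
    (hδmeas : Measurable fun p : T × T => δ p.1 p.2)
    (hPmeas : MeasurableSet {p : T × T | P p.1 p.2}) (g : G) :
    Measurable (termH δ P r S g) := by
  apply Measurable.div
  · refine Measurable.ite ?_ ?_ measurable_const
    · refine MeasurableSet.inter ?_ (MeasurableSet.inter ?_ ?_)
      · exact hact g⁻¹ (measurableSet_minRep hact r g)
      · exact measurableSet_rel hPmeas (hact g⁻¹) measurable_id
      · exact measurableSet_bd hPmeas S hact (hact g⁻¹) measurable_id
    · exact (hδmeas.comp (measurable_id.prodMk (hact g⁻¹))).ennreal_ofReal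
  · exact (measurable_massE hact hδmeas hPmeas).comp (hact g⁻¹)

lemma measurable_termL [StandardBorelSpace T] [Countable G]
    (hact : ∀ g : G, Measurable fun x : T => g • x)
    (hδmeas : Measurable fun p : T × T => δ p.1 p.2)
    (hPmeas : MeasurableSet {p : T × T | P p.1 p.2}) (g : G) :
    Measurable (termL δ P r S g) := by
  have : termL δ P r S g = fun x => termH δ P r S g (g • x) := funext (termL_eq_termH g)
  rw [this]
  exact (measurable_termH hact hδmeas hPmeas g).comp (hact g)

/-- The mass-transport identity: the integral of the boundary-mass ratio equals the
measure of the set of points on the `S`-boundary of their own class. -/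
lemma key_integral [StandardBorelSpace T] [Countable G]
    (hact : ∀ g : G, Measurable fun x : T => g • x) (ν : Measure T)
    (hδmeas : Measurable fun p : T × T => δ p.1 p.2)
    (hδpos : ∀ x y : T, 0 < δ x y)
    (hδone : ∀ x : T, δ x x = 1)
    (hδcocycle : ∀ x y z : T, y ∈ orbit G x → z ∈ orbit G x → δ x z = δ x y * δ y z)
    (hδRN : ∀ g : G, ∀ B : Set T, MeasurableSet B →
      ν ((fun x => g • x) '' B) = ∫⁻ x in B, ENNReal.ofReal (δ (g • x) x) ∂ν)
    (hPmeas : MeasurableSet {p : T × T | P p.1 p.2})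
    (hPrefl : ∀ a : T, P a a)
    (hPsymm : ∀ {a b : T}, P a b → P b a) (hPtrans : ∀ {a b c : T}, P a b → P b c → P a c)
    (hPsub : ∀ a b : T, P a b → b ∈ orbit G a) (hPfin : ∀ a : T, {b | P a b}.Finite)
    (hr : Function.Injective r) :
    ∫⁻ x, bdryE δ P r S x / massE δ P r x ∂ν = ν {y : T | ∃ s ∈ S, ¬ P y (s • y)} := by
  have hsub : ∀ a : T, ∀ b, P a b → ∃ g : G, g • a = b :=
    fun a b h => mem_orbit_iff.1 (hPsub a b h)
  have hm0 : ∀ x : T, massE δ P r (G := G) x ≠ 0 :=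
    fun x => massE_ne_zero hδpos hr x (hPrefl x) (hsub x) (hPfin x)
  have hmtop : ∀ x : T, massE δ P r (G := G) x ≠ ⊤ :=
    fun x => massE_ne_top hr x (hsub x) (hPfin x)
  -- step 1 : the integrand is a tsum of termL
  have step1 : ∀ x : T, bdryE δ P r S x / massE δ P r x = ∑' g : G, termL δ P r S g x := by
    intro x
    rw [bdryE, div_eq_mul_inv, ← ENNReal.tsum_mul_right]
    exact tsum_congr fun g => (div_eq_mul_inv _ _).symm
  -- step 2 : swap integral and sum, change variables in each term
  have step2 : ∫⁻ x, bdryE δ P r S x / massE δ P r x ∂ν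
      = ∫⁻ y, ∑' g : G, termH δ P r S g y * ENNReal.ofReal (δ (g⁻¹ • y) y) ∂ν := by
    simp_rw [step1]
    rw [lintegral_tsum fun g => (measurable_termL hact hδmeas hPmeas g).aemeasurable]
    have hmg : ∀ g : G, Measurable fun y : T =>
        termH δ P r S g y * ENNReal.ofReal (δ (g⁻¹ • y) y) := fun g =>
      (measurable_termH hact hδmeas hPmeas g).mul (Measurable.ennreal_ofReal
        (show Measurable fun y : T => δ (g⁻¹ • y) y from
          hδmeas.comp ((hact g⁻¹).prodMk measurable_id)))
    rw [lintegral_tsum fun g => (hmg g).aemeasurable]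
    refine tsum_congr fun g => ?_
    calc ∫⁻ x, termL δ P r S g x ∂ν = ∫⁻ x, termH δ P r S g (g • x) ∂ν := by
          simp_rw [termL_eq_termH]
      _ = _ := lintegral_smul_cov hact ν hδmeas hδRN g _
            (measurable_termH hact hδmeas hPmeas g)
  -- step 3 : pointwise evaluation of the inner sum
  have step3 : ∀ y : T, (∑' g : G, termH δ P r S g y * ENNReal.ofReal (δ (g⁻¹ • y) y))
      = if (∃ s ∈ S, ¬ P y (s • y)) then 1 else 0 := by
    intro y
    set f : T → ℝ≥0∞ := fun z =>
      ((if P z y ∧ (∃ s ∈ S, ¬ P z (s • y)) then ENNReal.ofReal (δ y z) else 0)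
        / massE δ P r z) * ENNReal.ofReal (δ z y) with hf
    have h1 : (∑' g : G, termH δ P r S g y * ENNReal.ofReal (δ (g⁻¹ • y) y))
        = ∑' g : G, (if MinRep r g (g⁻¹ • y) then f (g⁻¹ • y) else 0) := by
      refine tsum_congr fun g => ?_
      by_cases hm : MinRep r g (g⁻¹ • y)
      · rw [if_pos hm, hf, termH]
        simp [hm]
      · simp [termH, hm]
    rw [h1, tsum_minRep' r hr y f (hPfin y).toFinset
      (fun z hz => by
        have hPzy : P z y := by
          by_contra hzz
          exact hz (by simp [hf, hzz])
        exact (hPfin y).mem_toFinset.2 (hPsymm hPzy))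
      (fun z hz => by
        have hyz : P y z := (hPfin y).mem_toFinset.1 hz
        rcases mem_orbit_iff.1 (hPsub y z hyz) with ⟨g, hg⟩
        exact ⟨g⁻¹, by rw [← hg, inv_smul_smul]⟩)]
    by_cases hB : ∃ s ∈ S, ¬ P y (s • y)
    · rw [if_pos hB]
      have hsummand : ∀ z ∈ (hPfin y).toFinset,
          f z = ENNReal.ofReal (δ z y) / massE δ P r y := by
        intro z hz
        have hyz : P y z := (hPfin y).mem_toFinset.1 hz
        have hzy : P z y := hPsymm hyz
        have hBz : ∃ s ∈ S, ¬ P z (s • y) := by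
          rcases hB with ⟨s, hs, hns⟩
          exact ⟨s, hs, fun hzz => hns (hPtrans hyz hzz)⟩
        have hmassz : massE δ P r (G := G) z = ENNReal.ofReal (δ y z) * massE δ P r y :=
          massE_cocycle hδpos hδcocycle hr @hPsymm @hPtrans hPsub hPfin hyz
        rw [hf]
        simp only [hzy, hBz, and_self, if_pos, true_and]
        rw [hmassz]
        have ha0 : ENNReal.ofReal (δ y z) ≠ 0 := (ENNReal.ofReal_pos.2 (hδpos y z)).ne'
        have hatop : ENNReal.ofReal (δ y z) ≠ ⊤ := ENNReal.ofReal_ne_top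
        calc ENNReal.ofReal (δ y z) / (ENNReal.ofReal (δ y z) * massE δ P r y)
              * ENNReal.ofReal (δ z y)
            = (ENNReal.ofReal (δ y z) * 1) / (ENNReal.ofReal (δ y z) * massE δ P r y)
              * ENNReal.ofReal (δ z y) := by rw [mul_one]
          _ = 1 / massE δ P r y * ENNReal.ofReal (δ z y) := by
              rw [ENNReal.mul_div_mul_left _ _ ha0 hatop]
          _ = ENNReal.ofReal (δ z y) / massE δ P r y := by
              rw [one_div, div_eq_mul_inv, mul_comm]
      rw [Finset.sum_congr rfl hsummand]
      simp only [div_eq_mul_inv]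
      rw [← Finset.sum_mul]
      rw [← massE_eq hr y (hsub y) (hPfin y), ← div_eq_mul_inv]
      exact ENNReal.div_self (hm0 y) (hmtop y)
    · rw [if_neg hB]
      refine Finset.sum_eq_zero fun z hz => ?_
      have hyz : P y z := (hPfin y).mem_toFinset.1 hz
      have hzy : P z y := hPsymm hyz
      have hBz : ¬ ∃ s ∈ S, ¬ P z (s • y) := by
        rintro ⟨s, hs, hns⟩
        exact hns (hPtrans hzy (by
          by_contra hyy
          exact hB ⟨s, hs, hyy⟩))
      rw [hf]
      simp only [hBz, and_false, if_neg, not_false_iff, ENNReal.zero_div, zero_mul]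
  -- conclude
  rw [step2]
  have : ∀ y : T, (∑' g : G, termH δ P r S g y * ENNReal.ofReal (δ (g⁻¹ • y) y))
      = Set.indicator {y : T | ∃ s ∈ S, ¬ P y (s • y)} (fun _ => 1) y := by
    intro y
    rw [step3 y, Set.indicator_apply]
    rfl
  simp_rw [this]
  have hBmeas : MeasurableSet {y : T | ∃ s ∈ S, ¬ P y (s • y)} := by
    simpa using measurableSet_bd (P := P) hPmeas S hact measurable_id measurable_id
  rw [lintegral_indicator hBmeas]
  simp
end KeySec

theorem hyperfinite_implies_deltaFolner
    {T : Type*} [MeasurableSpace T] [StandardBorelSpace T]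
    {G : Type*} [Group G] [Countable G] [MulAction G T]
    (hact : ∀ g : G, Measurable fun x : T => g • x)
    (ν : Measure T) [IsFiniteMeasure ν]
    (δ : T → T → ℝ)
    (hδmeas : Measurable fun p : T × T => δ p.1 p.2)
    (hδpos : ∀ x y : T, 0 < δ x y)
    (hδone : ∀ x : T, δ x x = 1)
    (hδcocycle : ∀ x y z : T, y ∈ orbit G x → z ∈ orbit G x →
      δ x z = δ x y * δ y z)
    (hδRN : ∀ g : G, ∀ B : Set T, MeasurableSet B →
      ν ((fun x => g • x) '' B) = ∫⁻ x in B, ENNReal.ofReal (δ (g • x) x) ∂ν)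
    (S : Finset G) (hSsym : ∀ s ∈ S, s⁻¹ ∈ S)
    (hSgen : Subgroup.closure (S : Set G) = ⊤)
    (Q : ℕ → T → T → Prop)
    (hQequiv : ∀ n, Equivalence (Q n))
    (hQmeas : ∀ n, MeasurableSet {p : T × T | Q n p.1 p.2})
    (hQsub : ∀ n, ∀ x y : T, Q n x y → y ∈ orbit G x)
    (hQfin : ∀ n, ∀ x : T, {y | Q n x y}.Finite)
    (hQmono : ∀ n, ∀ x y : T, Q n x y → Q (n + 1) x y)
    (hQexhaust : ∀ᵐ x ∂ν, ∀ y ∈ orbit G x, ∃ n, Q n x y) :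
    ∀ᵐ x ∂ν,
      liminf (fun n =>
          deltaMass δ (smulBoundary S {y | Q n x y}) x / deltaMass δ {y | Q n x y} x)
        atTop = 0 ∧
      ∃ A : ℕ → Set T,
        (∀ n, (A n).Finite ∧ (A n).Nonempty ∧ A n ⊆ orbit G x) ∧
        Tendsto (fun n => deltaMass δ (smulBoundary S (A n)) x / deltaMass δ (A n) x)
          atTop (nhds 0) := by
  classical
  obtain ⟨r, hr⟩ := (countable_iff_exists_injective G).1 inferInstance
  -- the boundary-point sets
  set B : ℕ → Set T := fun n => {y : T | ∃ s ∈ S, ¬ Q n y (s • y)} with hB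
  -- the mass-transport identity for each n
  have hkey : ∀ n, ∫⁻ x, bdryE δ (Q n) r S x / massE δ (Q n) r x ∂ν = ν (B n) := by
    intro n
    exact key_integral hact ν hδmeas hδpos hδone hδcocycle hδRN (hQmeas n)
      (hQequiv n).refl (fun h => (hQequiv n).symm h)
      (fun h h' => (hQequiv n).trans h h') (hQsub n) (hQfin n) hr
  have hBmeas : ∀ n, MeasurableSet (B n) := fun n => by
    simpa only [id_eq] using
      measurableSet_bd (P := Q n) (hQmeas n) S hact measurable_id measurable_id
  -- monotonicity of Q in n
  have hQle : ∀ m n : ℕ, m ≤ n → ∀ a b : T, Q m a b → Q n a b := by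
    intro m n hmn
    induction hmn with
    | refl => exact fun a b h => h
    | @step k hk ih => exact fun a b hq => hQmono k a b (ih a b hq)
  have hBanti : Antitone B := by
    refine antitone_nat_of_succ_le fun n y hy => ?_
    obtain ⟨s, hs, hns⟩ := hy
    exact ⟨s, hs, fun h => hns (hQmono n _ _ h)⟩
  -- the boundary sets intersect to a null set
  have hnull : ν (⋂ n, B n) = 0 := by
    refine measure_mono_null (fun x hx => ?_) (ae_iff.1 hQexhaust)
    simp only [mem_iInter] at hx
    simp only [mem_setOf_eq, not_forall]
    by_contra hcon
    push_neg at hcon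
    have hs' : ∀ s : G, ∃ n, s ∈ S → Q n x (s • x) := by
      intro s
      by_cases hs : s ∈ S
      · obtain ⟨n, hn⟩ := hcon (s • x) (mem_orbit_iff.2 ⟨s, rfl⟩)
        exact ⟨n, fun _ => hn⟩
      · exact ⟨0, fun h => absurd h hs⟩
    choose nf hnf using hs'
    obtain ⟨s, hs, hns⟩ := hx (S.sup nf)
    exact hns (hQle (nf s) (S.sup nf) (Finset.le_sup hs) _ _ (hnf s hs))
  have htendB : Tendsto (fun n => ν (B n)) atTop (nhds 0) := by
    have := tendsto_measure_iInter_atTop (μ := ν) (s := B)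
      (fun n => (hBmeas n).nullMeasurableSet) hBanti ⟨0, measure_ne_top ν _⟩
    rw [hnull] at this
    exact this
  have hItend : Tendsto (fun n => ∫⁻ x, bdryE δ (Q n) r S x / massE δ (Q n) r x ∂ν)
      atTop (nhds 0) := htendB.congr fun n => (hkey n).symm
  -- extract a subsequence with summable integrals
  have hev : ∀ k : ℕ, ∀ᶠ n in atTop,
      ∫⁻ x, bdryE δ (Q n) r S x / massE δ (Q n) r x ∂ν < (2:ℝ≥0∞)⁻¹ ^ k := by
    intro k
    refine hItend.eventually (gt_mem_nhds ?_)
    exact ENNReal.pow_pos (ENNReal.inv_pos.2 (by norm_num)) k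
  obtain ⟨φ, hφmono, hφ⟩ := Filter.extraction_forall_of_eventually hev
  have hfmeas : ∀ n, Measurable fun x => bdryE δ (Q n) r S x / massE δ (Q n) r x :=
    fun n => (measurable_bdryE hact hδmeas (hQmeas n) S).div
      (measurable_massE hact hδmeas (hQmeas n))
  have hsumtop : (∑' k : ℕ, ∫⁻ x, bdryE δ (Q (φ k)) r S x / massE δ (Q (φ k)) r x ∂ν) ≠ ⊤ := by
    refine ne_top_of_le_ne_top ?_ (ENNReal.tsum_le_tsum fun k => (hφ k).le)
    rw [ENNReal.tsum_geometric]
    refine ENNReal.inv_ne_top.2 ?_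
    simp [tsub_eq_zero_iff_le]
  have hlint : ∫⁻ x, ∑' k : ℕ, bdryE δ (Q (φ k)) r S x / massE δ (Q (φ k)) r x ∂ν ≠ ⊤ := by
    rw [lintegral_tsum fun k => (hfmeas (φ k)).aemeasurable]
    exact hsumtop
  have hae1 : ∀ᵐ x ∂ν, (∑' k : ℕ, bdryE δ (Q (φ k)) r S x / massE δ (Q (φ k)) r x) < ⊤ :=
    ae_lt_top (Measurable.ennreal_tsum fun k => hfmeas (φ k)) hlint
  -- pointwise data : ratio conversion
  have hconv : ∀ n : ℕ, ∀ x : T, ∃ b m : ℝ, 0 ≤ b ∧ 0 < m ∧ b ≤ m ∧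
      deltaMass δ (smulBoundary S {y | Q n x y}) x = b ∧
      deltaMass δ {y | Q n x y} x = m ∧
      bdryE δ (Q n) r S x = ENNReal.ofReal b ∧
      massE δ (Q n) r x = ENNReal.ofReal m := by
    intro n x
    have hsubx : ∀ y, Q n x y → ∃ g : G, g • x = y :=
      fun y h => mem_orbit_iff.1 (hQsub n x y h)
    set C : Finset T := (hQfin n x).toFinset with hC
    set Bf : Finset T := C.filter (fun y => ∃ s ∈ S, ¬ Q n x (s • y)) with hBf
    refine ⟨∑ y ∈ Bf, δ y x, ∑ y ∈ C, δ y x, ?_, ?_, ?_, ?_, ?_, ?_, ?_⟩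
    · exact Finset.sum_nonneg fun y _ => (hδpos y x).le
    · exact Finset.sum_pos (fun y _ => hδpos y x)
        ⟨x, (hQfin n x).mem_toFinset.2 ((hQequiv n).refl x)⟩
    · exact Finset.sum_le_sum_of_subset_of_nonneg (Finset.filter_subset _ _)
        (fun y _ _ => (hδpos y x).le)
    · rw [deltaMass]
      have hcoe : smulBoundary S {y | Q n x y} = ↑Bf := by
        ext z
        simp [smulBoundary, hBf, hC, Finite.mem_toFinset]
      rw [hcoe, finsum_mem_coe_finset]
    · rw [deltaMass, ← (hQfin n x).coe_toFinset, finsum_mem_coe_finset]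
    · rw [bdryE_eq hr S x hsubx (hQfin n x),
        ENNReal.ofReal_sum_of_nonneg (fun y _ => (hδpos y x).le), hBf,
        Finset.sum_filter]
    · rw [massE_eq hr x hsubx (hQfin n x),
        ENNReal.ofReal_sum_of_nonneg (fun y _ => (hδpos y x).le)]
  -- almost-every point conclusion
  filter_upwards [hae1] with x hx
  have htend0 : Tendsto (fun k => bdryE δ (Q (φ k)) r S x / massE δ (Q (φ k)) r x)
      atTop (nhds 0) := ENNReal.tendsto_atTop_zero_of_tsum_ne_top hx.ne
  set u : ℕ → ℝ := fun n =>
    deltaMass δ (smulBoundary S {y | Q n x y}) x / deltaMass δ {y | Q n x y} x with hu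
  have hu_eq : ∀ n, u n = (bdryE δ (Q n) r S x / massE δ (Q n) r x).toReal := by
    intro n
    obtain ⟨b, m, hb, hm, _, hdb, hdm, heb, hem⟩ := hconv n x
    rw [hu]
    simp only [hdb, hdm, heb, hem, ENNReal.toReal_div, ENNReal.toReal_ofReal hb,
      ENNReal.toReal_ofReal hm.le]
  have hu01 : ∀ n, 0 ≤ u n ∧ u n ≤ 1 := by
    intro n
    obtain ⟨b, m, hb, hm, hbm, hdb, hdm, _, _⟩ := hconv n x
    constructor
    · rw [hu]; simp only [hdb, hdm]; positivity
    · rw [hu]; simp only [hdb, hdm]; rw [div_le_one hm]; exact hbm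
  have hutend : Tendsto (fun k => u (φ k)) atTop (nhds 0) := by
    have h1 := (ENNReal.tendsto_toReal (by simp : (0:ℝ≥0∞) ≠ ⊤)).comp htend0
    simp only [ENNReal.toReal_zero] at h1
    exact h1.congr fun k => (hu_eq (φ k)).symm
  have hbdd_below : IsBoundedUnder (· ≥ ·) atTop u :=
    isBoundedUnder_of ⟨0, fun n => (hu01 n).1⟩
  have hbdd_above : IsBoundedUnder (· ≤ ·) atTop u :=
    isBoundedUnder_of ⟨1, fun n => (hu01 n).2⟩
  have hliminf : liminf u atTop = 0 := by
    refine le_antisymm ?_ ?_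
    · refine le_of_forall_gt_imp_ge_of_dense fun ε hε => ?_
      refine liminf_le_of_frequently_le ?_ hbdd_below
      have hfreq : ∃ᶠ k in atTop, u (φ k) ≤ ε :=
        ((hutend.eventually_lt_const hε).mono fun k h => h.le).frequently
      exact hφmono.tendsto_atTop.frequently hfreq
    · exact le_liminf_of_le hbdd_above.isCoboundedUnder_ge
        (Eventually.of_forall fun n => (hu01 n).1)
  refine ⟨hliminf, fun k => {y | Q (φ k) x y}, fun k =>
    ⟨hQfin (φ k) x, ⟨x, (hQequiv (φ k)).refl x⟩, fun y hy => hQsub (φ k) x y hy⟩, hutend⟩
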